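/- Let f, g be n×n complex matrices whose spectra are both 2iπ-congruence free. If exp(f)·exp(g) = exp(g)·exp(f), then fg = gf. -/

import Mathlib

open Matrix NormedSpace Complex
open scoped Nat

namespace Stmt4Aux

attribute [local instance] Matrix.linftyOpNormedAddCommGroup Matrix.linftyOpNormedSpace
  Matrix.linftyOpNormedRing Matrix.linftyOpNormedAlgebra

variable {n : ℕ}

local notation "V" => Matrix (Fin n) (Fin n) ℂ

noncomputable local instance uniformV : UniformSpace V :=
  (Matrix.linftyOpNormedAddCommGroup (m := Fin n) (n := Fin n) (α := ℂ)).toUniformSpace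

noncomputable local instance topV : TopologicalSpace V := uniformV.toTopologicalSpace

noncomputable local instance ratAlgCLM : NormedAlgebra ℚ (V →L[ℂ] V) :=
  NormedAlgebra.restrictScalars ℚ ℂ (V →L[ℂ] V)

noncomputable def lmulCLM (A : V) : V →L[ℂ] V :=
  LinearMap.toContinuousLinearMap (LinearMap.mulLeft ℂ A)

noncomputable def rmulCLM (A : V) : V →L[ℂ] V :=
  LinearMap.toContinuousLinearMap (LinearMap.mulRight ℂ A)

@[simp] lemma lmulCLM_apply (A X : V) : lmulCLM A X = A * X := rfl
@[simp] lemma rmulCLM_apply (A X : V) : rmulCLM A X = X * A := rfl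

noncomputable def lmulHom : V →ₐ[ℂ] (V →L[ℂ] V) where
  toFun := lmulCLM
  map_one' := by ext X; simp
  map_mul' A B := by ext X; simp [mul_assoc]
  map_zero' := by ext X; simp
  map_add' A B := by ext X; simp [add_mul]
  commutes' c := by
    ext X
    simp [Algebra.algebraMap_eq_smul_one, smul_mul_assoc]

noncomputable def rmulHom : (V)ᵐᵒᵖ →ₐ[ℂ] (V →L[ℂ] V) where
  toFun A := rmulCLM A.unop
  map_one' := by ext X; simp
  map_mul' A B := by ext X; simp [mul_assoc]
  map_zero' := by ext X; simp
  map_add' A B := by ext X; simp [mul_add]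
  commutes' c := by
    ext X
    simp [Algebra.algebraMap_eq_smul_one, mul_smul_comm]

lemma continuous_lmulHom : Continuous (lmulHom (n := n)) :=
  LinearMap.continuous_of_finiteDimensional (lmulHom (n := n)).toLinearMap

lemma continuous_rmulHom : Continuous (rmulHom (n := n)) :=
  LinearMap.continuous_of_finiteDimensional (rmulHom (n := n)).toLinearMap

lemma lmul_exp (A : V) : lmulCLM (exp A) = exp (lmulCLM A) :=
  map_exp (lmulHom (n := n)) continuous_lmulHom A

lemma rmul_exp (A : V) : rmulCLM (exp A) = exp (rmulCLM A) := by
  have h := map_exp (rmulHom (n := n)) continuous_rmulHom (MulOpposite.op A)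
  rw [exp_op] at h
  exact h

noncomputable def adCLM (A : V) : V →L[ℂ] V := lmulCLM A - rmulCLM A

lemma commute_lr (A : V) : Commute (lmulCLM A) (rmulCLM A) := by
  apply ContinuousLinearMap.ext
  intro X
  simp [ContinuousLinearMap.mul_apply, mul_assoc]

lemma exp_ad_apply (A X : V) : exp (adCLM A) X = exp A * X * exp (-A) := by
  have hneg : -(rmulCLM A) = rmulCLM (-A) := by
    apply ContinuousLinearMap.ext; intro X; simp
  have hc : Commute (lmulCLM A) (-(rmulCLM A)) := (commute_lr A).neg_right
  have h1 : adCLM A = lmulCLM A + -(rmulCLM A) := by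
    simp [adCLM, sub_eq_add_neg]
  rw [h1, NormedSpace.exp_add_of_commute hc, hneg, ← lmul_exp, ← rmul_exp]
  simp [ContinuousLinearMap.mul_apply, mul_assoc]

lemma clm_exp_apply (M : V →L[ℂ] V) (x : V) :
    exp M x = ∑' i : ℕ, (i !⁻¹ : ℂ) • (M ^ i) x := by
  have hs : Summable fun i : ℕ => (i !⁻¹ : ℂ) • M ^ i := expSeries_summable' (𝕂 := ℂ) M
  have := (ContinuousLinearMap.apply ℂ V x).map_tsum hs
  rw [exp_eq_tsum ℂ]
  simpa using this

lemma pow_apply_eq_zero_mono {M : V →L[ℂ] V} {x : V} {a b : ℕ} (hab : a ≤ b)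
    (h : (M ^ a) x = 0) : (M ^ b) x = 0 := by
  rw [← Nat.sub_add_cancel hab, pow_add, ContinuousLinearMap.mul_apply, h, map_zero]

lemma exp_apply_eq_sum (M : V →L[ℂ] V) (x : V) (K : ℕ) (h : (M ^ K) x = 0) :
    exp M x = ∑ i ∈ Finset.range K, (i !⁻¹ : ℂ) • (M ^ i) x := by
  rw [clm_exp_apply]
  refine tsum_eq_sum fun i hi => ?_
  rw [pow_apply_eq_zero_mono (le_of_not_gt fun hc => hi (Finset.mem_range.2 hc)) h, smul_zero]

lemma nilpotent_exp_sub_one (M : V →L[ℂ] V) :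
    ∀ (k : ℕ) (x : V), (M ^ k) x = 0 → ((exp M - 1) ^ k) x = 0 := by
  intro k
  induction k with
  | zero => intro x hx; simpa using hx
  | succ k ih =>
    intro x hx
    have hy : (M ^ k) ((exp M - 1) x) = 0 := by
      have hexp : exp M x = ∑ i ∈ Finset.range (k + 1), (i !⁻¹ : ℂ) • (M ^ i) x :=
        exp_apply_eq_sum M x (k + 1) hx
      have hsub : (exp M - 1) x = ∑ i ∈ Finset.range k, ((i + 1)!⁻¹ : ℂ) • (M ^ (i + 1)) x := by
        rw [ContinuousLinearMap.sub_apply, hexp, Finset.sum_range_succ']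
        simp
      rw [hsub, map_sum]
      refine Finset.sum_eq_zero fun i _ => ?_
      rw [_root_.map_smul]
      have : (M ^ k) ((M ^ (i + 1)) x) = (M ^ (k + (i + 1))) x := by
        rw [← ContinuousLinearMap.mul_apply, ← pow_add]
      rw [this, pow_apply_eq_zero_mono (by omega) hx, smul_zero]
    have : ((exp M - 1) ^ (k + 1)) x = ((exp M - 1) ^ k) ((exp M - 1) x) := by
      rw [pow_succ, ContinuousLinearMap.mul_apply]
    rw [this]
    exact ih _ hy

lemma coe_pow_apply (f : V →L[ℂ] V) (k : ℕ) :
    ∀ x : V, (((f : Module.End ℂ V)) ^ k) x = (f ^ k) x := by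
  induction k with
  | zero => intro x; simp
  | succ k ih =>
    intro x
    rw [pow_succ, pow_succ, Module.End.mul_apply, ContinuousLinearMap.mul_apply]
    exact ih (f x)

lemma maxGen_le_exp (M : V →L[ℂ] V) (μ : ℂ) :
    Module.End.maxGenEigenspace (M : Module.End ℂ V) μ ≤
      Module.End.maxGenEigenspace ((exp M : V →L[ℂ] V) : Module.End ℂ V) (Complex.exp μ) := by
  intro x hx
  rw [Module.End.mem_maxGenEigenspace] at hx ⊢
  obtain ⟨k, hk⟩ := hx
  refine ⟨k, ?_⟩
  set N : V →L[ℂ] V := M - algebraMap ℂ (V →L[ℂ] V) μ with hN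
  have hMN : M = algebraMap ℂ (V →L[ℂ] V) μ + N := by rw [hN]; abel
  have hexpM : exp M = Complex.exp μ • exp N := by
    rw [hMN, NormedSpace.exp_add_of_commute (Algebra.commutes μ N), ← algebraMap_exp_comm,
      ← Complex.exp_eq_exp_ℂ, Algebra.algebraMap_eq_smul_one, smul_mul_assoc, one_mul]
  have hNk : (N ^ k) x = 0 := by
    rw [← coe_pow_apply]
    have hcoe : (N : Module.End ℂ V)
        = (M : Module.End ℂ V) - μ • (1 : Module.End ℂ V) := by
      ext y
      simp [hN, Algebra.algebraMap_eq_smul_one]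
    rw [hcoe]
    exact hk
  have key := nilpotent_exp_sub_one N k x hNk
  have hco : ((exp M : V →L[ℂ] V) : Module.End ℂ V) - Complex.exp μ • (1 : Module.End ℂ V)
      = Complex.exp μ • (((exp N : V →L[ℂ] V) : Module.End ℂ V) - 1) := by
    ext y
    simp [hexpM, smul_sub]
  rw [hco, smul_pow, LinearMap.smul_apply]
  have hNe : (((((exp N : V →L[ℂ] V) : Module.End ℂ V) - 1) ^ k) x) = 0 := by
    have h2 : ((exp N : V →L[ℂ] V) : Module.End ℂ V) - 1
        = ((exp N - 1 : V →L[ℂ] V) : Module.End ℂ V) := by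
      ext y; simp
    rw [h2, coe_pow_apply]
    exact key
  rw [hNe, smul_zero]

lemma exists_spec_diff {A : V} {μ : ℂ}
    (hbot : Module.End.maxGenEigenspace ((adCLM A : V →L[ℂ] V) : Module.End ℂ V) μ ≠ ⊥) :
    ∃ u ∈ spectrum ℂ A, ∃ v ∈ spectrum ℂ A, μ = u - v := by
  have hev : Module.End.HasEigenvalue ((adCLM A : V →L[ℂ] V) : Module.End ℂ V) μ := by
    obtain ⟨x, hx, hx0⟩ := Submodule.ne_bot_iff _ |>.1 hbot
    rw [Module.End.mem_maxGenEigenspace] at hx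
    obtain ⟨k, hk⟩ := hx
    refine Module.End.hasEigenvalue_of_hasGenEigenvalue (k := k) ?_
    rw [Module.End.hasGenEigenvalue_iff]
    exact (Submodule.ne_bot_iff _).2 ⟨x, Module.End.mem_genEigenspace_nat.2 hk, hx0⟩
  obtain ⟨X, hX⟩ := hev.exists_hasEigenvector
  have hX0 : X ≠ 0 := hX.2
  have hXeq : A * X - X * A = μ • X := by
    have := Module.End.mem_eigenspace_iff.mp hX.1
    simpa [adCLM] using this
  set B : V := μ • (1 : V) + A with hB
  have hAB : A * X = X * B := by
    calc A * X = (A * X - X * A) + X * A := by abel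
    _ = μ • X + X * A := by rw [hXeq]
    _ = X * B := by rw [hB, mul_add, mul_smul_comm, mul_one]
  have hw : ∃ w : Fin n → ℂ, X *ᵥ w ≠ 0 := by
    by_contra hcon
    push_neg at hcon
    apply hX0
    ext i j
    have := congrFun (hcon (Pi.single j 1)) i
    simpa [Matrix.mulVec, dotProduct, Pi.single_apply] using this
  obtain ⟨w, hw⟩ := hw
  set ψ := Matrix.toLinAlgEquiv' (R := ℂ) (n := Fin n) with hphi
  have hex : ∃ ν : ℂ, ∃ v, v ∈ Module.End.maxGenEigenspace (ψ B) ν ∧ X *ᵥ v ≠ 0 := by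
    by_contra hcon
    push_neg at hcon
    have hle : (⨆ ν : ℂ, Module.End.maxGenEigenspace (ψ B) ν) ≤ LinearMap.ker (ψ X) := by
      refine iSup_le fun ν v hv => ?_
      rw [LinearMap.mem_ker, Matrix.toLinAlgEquiv'_apply]
      exact hcon ν v hv
    rw [Module.End.iSup_maxGenEigenspace_eq_top] at hle
    have := hle (Submodule.mem_top : w ∈ ⊤)
    rw [LinearMap.mem_ker, Matrix.toLinAlgEquiv'_apply] at this
    exact hw this
  obtain ⟨ν, v, hv, hXv⟩ := hex
  obtain ⟨k, hk⟩ := (Module.End.mem_maxGenEigenspace _ _ _).1 hv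
  have hstep : (A - ν • 1) * X = X * (B - ν • 1) := by
    rw [sub_mul, mul_sub, hAB]
    congr 1
    rw [smul_mul_assoc, one_mul, mul_smul_comm, mul_one]
  have hpow : ∀ m : ℕ, (A - ν • 1) ^ m * X = X * (B - ν • 1) ^ m := by
    intro m
    induction m with
    | zero => simp
    | succ m ih =>
      calc (A - ν • 1) ^ (m + 1) * X = (A - ν • 1) * ((A - ν • 1) ^ m * X) := by
            rw [pow_succ', mul_assoc]
      _ = (A - ν • 1) * (X * (B - ν • 1) ^ m) := by rw [ih]
      _ = ((A - ν • 1) * X) * (B - ν • 1) ^ m := by rw [mul_assoc]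
      _ = (X * (B - ν • 1)) * (B - ν • 1) ^ m := by rw [hstep]
      _ = X * (B - ν • 1) ^ (m + 1) := by rw [pow_succ', mul_assoc]
  have hkB : (B - ν • 1) ^ k *ᵥ v = 0 := by
    have hphik : ψ ((B - ν • 1) ^ k) = (ψ B - ν • 1) ^ k := by
      rw [map_pow, map_sub, _root_.map_smul, _root_.map_one]
    have h2 := hk
    rw [← hphik] at h2
    rw [← Matrix.toLinAlgEquiv'_apply]
    exact h2
  have hmem : X *ᵥ v ∈ Module.End.maxGenEigenspace (ψ A) ν := by
    rw [Module.End.mem_maxGenEigenspace]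
    refine ⟨k, ?_⟩
    have hphiA : ((ψ A) - ν • 1) ^ k = ψ ((A - ν • 1) ^ k) := by
      rw [map_pow, map_sub, _root_.map_smul, _root_.map_one]
    rw [hphiA, Matrix.toLinAlgEquiv'_apply, Matrix.mulVec_mulVec, hpow k,
      ← Matrix.mulVec_mulVec, hkB, Matrix.mulVec_zero]
  have hνA : ν ∈ spectrum ℂ A := by
    rw [← AlgEquiv.spectrum_eq ψ A, ← Module.End.hasEigenvalue_iff_mem_spectrum]
    obtain ⟨k', hk'⟩ := (Module.End.mem_maxGenEigenspace _ _ _).1 hmem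
    refine Module.End.hasEigenvalue_of_hasGenEigenvalue (k := k') ?_
    rw [Module.End.hasGenEigenvalue_iff]
    exact (Submodule.ne_bot_iff _).2 ⟨X *ᵥ v, Module.End.mem_genEigenspace_nat.2 hk', hXv⟩
  have hνB : ν ∈ spectrum ℂ B := by
    rw [← AlgEquiv.spectrum_eq ψ B, ← Module.End.hasEigenvalue_iff_mem_spectrum]
    refine Module.End.hasEigenvalue_of_hasGenEigenvalue (k := k) ?_
    rw [Module.End.hasGenEigenvalue_iff]
    refine (Submodule.ne_bot_iff _).2 ⟨v, Module.End.mem_genEigenspace_nat.2 hk, ?_⟩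
    rintro rfl
    exact hXv (by simp)
  have hspec : ν - μ ∈ spectrum ℂ A := by
    have h1 : B = algebraMap ℂ V μ + A := by rw [hB, Algebra.algebraMap_eq_smul_one]
    rw [h1, ← spectrum.singleton_add_eq] at hνB
    obtain ⟨a, ha, b, hb, hab⟩ := Set.mem_add.1 hνB
    rw [Set.mem_singleton_iff] at ha
    have hb' : ν - μ = b := by rw [← hab, ha]; ring
    rwa [hb']
  exact ⟨ν, hνA, ν - μ, hspec, by ring⟩

lemma descend (M : V →L[ℂ] V) (x : V) (K : ℕ) (hK : (M ^ K) x = 0)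
    (hx : exp M x = x) : M x = 0 := by
  rcases Nat.eq_zero_or_pos K with h0 | hKpos
  · subst h0
    rw [pow_zero, ContinuousLinearMap.one_apply] at hK
    rw [hK, map_zero]
  have hEq : ∑ i ∈ Finset.Ico 1 K, ((i)!⁻¹ : ℂ) • (M ^ i) x = 0 := by
    have h1 : exp M x = ∑ i ∈ Finset.range K, ((i)!⁻¹ : ℂ) • (M ^ i) x :=
      exp_apply_eq_sum M x K hK
    rw [hx] at h1
    rw [Finset.range_eq_Ico, Finset.sum_eq_sum_Ico_succ_bot hKpos] at h1
    simp only [pow_zero, ContinuousLinearMap.one_apply, Nat.factorial_zero, Nat.cast_one,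
      inv_one, one_smul] at h1
    exact (left_eq_add.1 h1)
  have main : ∀ d, ∀ m, 1 ≤ m → K ≤ m + d → (M ^ m) x = 0 := by
    intro d
    induction d with
    | zero => intro m h1 hKm; exact pow_apply_eq_zero_mono (by omega) hK
    | succ d ih =>
      intro m h1 hKm
      rcases le_or_gt K (m + d) with hle | hlt
      · exact ih m h1 hle
      · have hKeq : K = m + d + 1 := by omega
        have hhigh : ∀ i, m + 1 ≤ i → (M ^ i) x = 0 := fun i hi => ih i (by omega) (by omega)
        have happ := congrArg (fun y => (M ^ (m - 1)) y) hEq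
        simp only [map_sum, _root_.map_smul, map_zero] at happ
        have hterm : ∀ i ∈ Finset.Ico 1 K, ((i)!⁻¹ : ℂ) • (M ^ (m - 1)) ((M ^ i) x)
            = if i = 1 then (M ^ m) x else 0 := by
          intro i hi
          rw [Finset.mem_Ico] at hi
          have hcomb : (M ^ (m - 1)) ((M ^ i) x) = (M ^ (m - 1 + i)) x := by
            rw [← ContinuousLinearMap.mul_apply, ← pow_add]
          rcases eq_or_ne i 1 with rfl | hne
          · rw [if_pos rfl, hcomb]
            have hmm : m - 1 + 1 = m := by omega
            rw [hmm]
            simp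
          · rw [hcomb, hhigh (m - 1 + i) (by omega), smul_zero, if_neg hne]
        rw [Finset.sum_congr rfl hterm, Finset.sum_ite_eq' (Finset.Ico 1 K) 1 (fun _ => (M ^ m) x),
          if_pos (Finset.mem_Ico.2 ⟨le_rfl, by omega⟩)] at happ
        exact happ
  have := main K 1 le_rfl (by omega)
  rwa [pow_one] at this

lemma key (A X : V)
    (hA : ∀ u ∈ spectrum ℂ A, ∀ v ∈ spectrum ℂ A,
      ∀ k : ℤ, k ≠ 0 → u - v ≠ 2 * Real.pi * Complex.I * k)
    (hc : exp A * X = X * exp A) : A * X = X * A := by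
  set T : V →L[ℂ] V := adCLM A with hT
  set T' : Module.End ℂ V := (T : Module.End ℂ V) with hT'
  set C' : Module.End ℂ V := ((exp T : V →L[ℂ] V) : Module.End ℂ V) with hC'
  have hone : exp A * exp (-A) = 1 := by
    rw [← NormedSpace.exp_add_of_commute (Commute.refl A).neg_right]
    simp [exp_zero]
  have hCX : exp T X = X := by
    rw [hT, exp_ad_apply, hc, mul_assoc, hone, mul_one]
  have hXmem : X ∈ C'.maxGenEigenspace 1 := by
    rw [Module.End.mem_maxGenEigenspace]
    refine ⟨1, ?_⟩
    rw [pow_one, LinearMap.sub_apply, one_smul, Module.End.one_apply]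
    rw [sub_eq_zero]
    exact hCX
  have hQle : T'.maxGenEigenspace 0 ≤ C'.maxGenEigenspace 1 := by
    have := maxGen_le_exp T 0
    rwa [Complex.exp_zero] at this
  have hPle : (⨆ μ : ℂ, ⨆ _ : μ ≠ 0, T'.maxGenEigenspace μ)
      ≤ ⨆ ν : ℂ, ⨆ _ : ν ≠ (1:ℂ), C'.maxGenEigenspace ν := by
    refine iSup₂_le fun μ hμ => ?_
    rcases eq_or_ne (T'.maxGenEigenspace μ) ⊥ with hb | hb
    · rw [hb]; exact bot_le
    · obtain ⟨u, hu, v, hv, huv⟩ := exists_spec_diff hb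
      have hne : Complex.exp μ ≠ 1 := by
        intro hone1
        rw [Complex.exp_eq_one_iff] at hone1
        obtain ⟨k, hk⟩ := hone1
        have hk0 : k ≠ 0 := by
          rintro rfl
          rw [hk] at hμ
          simp at hμ
        refine hA u hu v hv k hk0 ?_
        rw [← huv, hk]
        ring
      refine le_trans (maxGen_le_exp T μ) ?_
      exact le_iSup₂_of_le (Complex.exp μ) hne le_rfl
  have hdisj : Disjoint (C'.maxGenEigenspace 1)
      (⨆ ν : ℂ, ⨆ _ : ν ≠ (1:ℂ), C'.maxGenEigenspace ν) :=
    Module.End.independent_maxGenEigenspace C' 1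
  have htop : T'.maxGenEigenspace 0 ⊔ (⨆ μ : ℂ, ⨆ _ : μ ≠ 0, T'.maxGenEigenspace μ) = ⊤ := by
    rw [eq_top_iff, ← Module.End.iSup_maxGenEigenspace_eq_top T']
    refine iSup_le fun μ => ?_
    rcases eq_or_ne μ 0 with rfl | hμ
    · exact le_sup_left
    · exact le_sup_of_le_right (le_iSup₂_of_le μ hμ le_rfl)
  have hG1 : C'.maxGenEigenspace 1 ≤ T'.maxGenEigenspace 0 := by
    have hmod := sup_inf_assoc_of_le (x := T'.maxGenEigenspace 0)
      (⨆ μ : ℂ, ⨆ _ : μ ≠ 0, T'.maxGenEigenspace μ) hQle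
    rw [htop, top_inf_eq] at hmod
    have hbot2 : (⨆ μ : ℂ, ⨆ _ : μ ≠ 0, T'.maxGenEigenspace μ) ⊓ C'.maxGenEigenspace 1 = ⊥ := by
      rw [inf_comm]
      exact disjoint_iff.1 (hdisj.mono_right hPle)
    rw [hbot2, sup_bot_eq] at hmod
    exact le_of_eq hmod
  have hXQ : X ∈ T'.maxGenEigenspace 0 := hG1 hXmem
  rw [Module.End.mem_maxGenEigenspace] at hXQ
  obtain ⟨K, hK⟩ := hXQ
  have hK' : (T ^ K) X = 0 := by
    rw [← coe_pow_apply]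
    simpa using hK
  have hTX : T X = 0 := descend T X K hK' hCX
  have hfin : A * X - X * A = 0 := by simpa [hT, adCLM] using hTX
  exact sub_eq_zero.1 hfin

end Stmt4Aux

theorem stmt_4 {n : ℕ} (f g : Matrix (Fin n) (Fin n) ℂ)
    (hf : ∀ u ∈ spectrum ℂ f, ∀ v ∈ spectrum ℂ f,
      ∀ k : ℤ, k ≠ 0 → u - v ≠ 2 * Real.pi * I * k)
    (hg : ∀ u ∈ spectrum ℂ g, ∀ v ∈ spectrum ℂ g,
      ∀ k : ℤ, k ≠ 0 → u - v ≠ 2 * Real.pi * I * k)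
    (h : exp f * exp g = exp g * exp f) :
    f * g = g * f := by
  have h1 : f * exp g = exp g * f := Stmt4Aux.key f (exp g) hf h
  have h2 : g * f = f * g := Stmt4Aux.key g f hg h1.symm
  exact h2.symm
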